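/- Let b⁺(k) = (2k+ε+1+ν)/4 and b⁻(k) = (2k+ε-1-ν)/4 in a discrete series representation (ν = 2n+ε-1, n ≥ 1), and let D₀(u_{n+2i}) = ∏_{m=1}^{i} β(n+2m-1) with β(m) = b⁻(m)/b⁺(m). Suppose f: {n, n+2, n+4, ...} → ℂ satisfies Σ_{i=0}^{∞} f(n+2i)·D₀(u_{n+2i}) = 0 (absolutely convergent). Then the sequence g defined by g(n+2k+1) = (1/b⁻(n+1))·g¹(n+2k+1)·Σ_{i=k+1}^{∞} f(n+2i)·D₀(u_{n+2i}) and g(n+2k) = 0, where g¹(n+2k+1) = ∏_{j=1}^{k} b⁺(n+2j-1)/b⁻(n+2j+1), satisfies the difference equation: f(n+k+1) = b⁺(n+k)g(n+k) - b⁻(n+k+2)g(n+k+2) for all k ≥ 0, and f(n) = -b⁻(n+1)g(n+1). -/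

import Mathlib

theorem stmt17 (n : ℕ) (hn : 1 ≤ n) (ε : ℕ) (hε : ε ≤ 1) (ν : ℝ)
    (hν : ν = 2 * (n : ℝ) + ε - 1)
    (bp bm : ℤ → ℝ)
    (hbp : ∀ m : ℤ, bp m = (2 * (m : ℝ) + ε + 1 + ν) / 4)
    (hbm : ∀ m : ℤ, bm m = (2 * (m : ℝ) + ε - 1 - ν) / 4)
    (D0 : ℕ → ℝ)
    (hD0 : ∀ i : ℕ, D0 i =
      ∏ m ∈ Finset.Icc 1 i, bm ((n : ℤ) + 2 * (m : ℤ) - 1) / bp ((n : ℤ) + 2 * (m : ℤ) - 1))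
    (g1 : ℕ → ℝ)
    (hg1 : ∀ k : ℕ, g1 k =
      ∏ j ∈ Finset.Icc 1 k, bp ((n : ℤ) + 2 * (j : ℤ) - 1) / bm ((n : ℤ) + 2 * (j : ℤ) + 1))
    (f : ℤ → ℂ)
    (hfodd : ∀ i : ℕ, f ((n : ℤ) + 2 * i + 1) = 0)
    (hsum : Summable (fun i : ℕ => ‖f ((n : ℤ) + 2 * i)‖ * |D0 i|))
    (hzero : ∑' i : ℕ, f ((n : ℤ) + 2 * i) * ((D0 i : ℝ) : ℂ) = 0)
    (g : ℤ → ℂ)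
    (hgodd : ∀ k : ℕ, g ((n : ℤ) + 2 * k + 1) =
      ((1 / bm ((n : ℤ) + 1) * g1 k : ℝ) : ℂ) *
        ∑' i : ℕ, f ((n : ℤ) + 2 * ((k : ℤ) + 1 + i)) * ((D0 (k + 1 + i) : ℝ) : ℂ))
    (hgeven : ∀ k : ℕ, g ((n : ℤ) + 2 * k) = 0) :
    (∀ k : ℕ, f ((n : ℤ) + k + 1) =
      ((bp ((n : ℤ) + k) : ℝ) : ℂ) * g ((n : ℤ) + k) -
        ((bm ((n : ℤ) + k + 2) : ℝ) : ℂ) * g ((n : ℤ) + k + 2)) ∧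
    f (n : ℤ) = -((bm ((n : ℤ) + 1) : ℝ) : ℂ) * g ((n : ℤ) + 1) := by
  -- simple closed forms for bp and bm
  have hbpv : ∀ m : ℤ, bp m = ((m : ℝ) + n + ε) / 2 := by
    intro m; rw [hbp, hν]; ring
  have hbmv : ∀ m : ℤ, bm m = ((m : ℝ) - n) / 2 := by
    intro m; rw [hbm, hν]; ring
  have hbm1 : bm ((n : ℤ) + 1) = 1 / 2 := by rw [hbmv]; push_cast; ring
  -- the summand
  set a : ℕ → ℂ := fun i => f ((n : ℤ) + 2 * i) * ((D0 i : ℝ) : ℂ) with ha_def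
  have ha : Summable a := by
    apply Summable.of_norm
    apply hsum.congr
    intro i
    simp [ha_def, norm_mul, map_mul, Complex.norm_real, Real.norm_eq_abs, abs_mul]
  have hashift : ∀ j : ℕ, Summable (fun i => a (j + i)) := by
    intro j
    exact ((summable_nat_add_iff j).2 ha).congr fun i => by rw [add_comm]
  set S : ℕ → ℂ := fun j => ∑' i, a (j + i) with hS_def
  have hS : ∀ j : ℕ, S j = a j + S (j + 1) := by
    intro j
    have h := Summable.tsum_eq_zero_add (hashift j)
    calc S j = a (j + 0) + ∑' i, a (j + (i + 1)) := h
      _ = a j + S (j + 1) := by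
          rw [add_zero]
          exact congrArg _ (tsum_congr fun i => congrArg a (by omega))
  have hS0 : S 0 = 0 := by
    rw [hS_def]
    simpa [ha_def] using hzero
  have hgodd' : ∀ k : ℕ, g ((n : ℤ) + 2 * k + 1) =
      ((1 / bm ((n : ℤ) + 1) * g1 k : ℝ) : ℂ) * S (k + 1) := by
    intro k
    rw [hgodd k]
    refine congrArg _ (tsum_congr fun i => ?_)
    simp only [ha_def]
    have harg : ((n:ℤ) + 2 * ((k:ℤ) + 1 + (i:ℤ))) = ((n:ℤ) + 2 * ((k + 1 + i : ℕ) : ℤ)) := by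
      push_cast; ring
    rw [harg]
  -- closed form for g1 t * D0 (t+1)
  have hclosed : ∀ t : ℕ, g1 t * D0 (t + 1) = 1 / (2 * (n : ℝ) + 2 * t + 1 + ε) := by
    intro t
    induction t with
    | zero =>
      have h1 : (0:ℝ) < 2 * (n : ℝ) + 1 + ε := by positivity
      simp only [hg1, hD0, Finset.Icc_self, Finset.prod_singleton]
      rw [Finset.Icc_eq_empty (by norm_num), Finset.prod_empty, hbpv, hbmv]
      push_cast
      rw [one_mul]
      have h0 : (0:ℝ) ≤ (n:ℝ) := Nat.cast_nonneg n
      have he : (0:ℝ) ≤ (ε:ℝ) := Nat.cast_nonneg ε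
      have h2 : ((n:ℝ) + 2 - 1 + n + ε) ≠ 0 := ne_of_gt (by linarith)
      field_simp
      ring
    | succ t ih =>
      have hg1s : g1 (t + 1) = g1 t *
          (bp ((n : ℤ) + 2 * ((t:ℤ) + 1) - 1) / bm ((n : ℤ) + 2 * ((t:ℤ) + 1) + 1)) := by
        rw [hg1 (t + 1), Finset.prod_Icc_succ_top (Nat.le_add_left 1 t), ← hg1 t]
        push_cast; ring_nf
      have hD0s : D0 (t + 2) = D0 (t + 1) *
          (bm ((n : ℤ) + 2 * ((t:ℤ) + 2) - 1) / bp ((n : ℤ) + 2 * ((t:ℤ) + 2) - 1)) := by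
        rw [hD0 (t + 2), show t + 2 = (t + 1) + 1 from rfl,
          Finset.prod_Icc_succ_top (Nat.le_add_left 1 (t+1)), ← hD0 (t + 1)]
        push_cast; ring_nf
      rw [hg1s, hD0s, hbpv, hbpv, hbmv, hbmv]
      push_cast
      have h1 : (0:ℝ) < 2 * (n : ℝ) + 2 * t + 1 + ε := by positivity
      have h2 : (0:ℝ) < 2 * (n : ℝ) + 2 * t + 3 + ε := by positivity
      have h3 : (0:ℝ) < 2 * (t : ℝ) + 3 := by positivity
      rw [show ((n:ℝ) + 2*((t:ℝ)+1) - 1 + n + ε)/2 = (2*(n:ℝ)+2*t+1+ε)/2 by ring,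
          show ((n:ℝ) + 2*((t:ℝ)+1) + 1 - n)/2 = (2*(t:ℝ)+3)/2 by ring,
          show ((n:ℝ) + 2*((t:ℝ)+2) - 1 - n)/2 = (2*(t:ℝ)+3)/2 by ring,
          show ((n:ℝ) + 2*((t:ℝ)+2) - 1 + n + ε)/2 = (2*(n:ℝ)+2*t+3+ε)/2 by ring]
      rw [show g1 t * ((2*(n:ℝ)+2*t+1+ε)/2 / ((2*(t:ℝ)+3)/2)) *
            (D0 (t+1) * ((2*(t:ℝ)+3)/2 / ((2*(n:ℝ)+2*t+3+ε)/2)))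
          = (g1 t * D0 (t+1)) * ((2*(n:ℝ)+2*t+1+ε)/2 / ((2*(t:ℝ)+3)/2)) *
            ((2*(t:ℝ)+3)/2 / ((2*(n:ℝ)+2*t+3+ε)/2)) by ring, ih]
      field_simp
      ring
  have hg1step : ∀ t : ℕ, g1 (t + 1) = g1 t *
      (bp ((n : ℤ) + 2 * ((t:ℤ) + 1) - 1) / bm ((n : ℤ) + 2 * ((t:ℤ) + 1) + 1)) := by
    intro t
    rw [hg1 (t + 1), Finset.prod_Icc_succ_top (Nat.le_add_left 1 t), ← hg1 t]
    push_cast; ring_nf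
  constructor
  · intro k
    rcases Nat.even_or_odd k with ⟨t, ht⟩ | ⟨t, ht⟩
    · -- even case
      subst ht
      have e1 : ((t + t : ℕ) : ℤ) = 2 * (t : ℤ) := by push_cast; ring
      rw [e1, hgeven t]
      have e2 : (n:ℤ) + 2*(t:ℤ) + 2 = (n:ℤ) + 2*((t+1:ℕ):ℤ) := by push_cast; ring
      rw [e2, hgeven (t+1)]
      simp [hfodd t]
    · -- odd case
      subst ht
      have e1 : ((2 * t + 1 : ℕ) : ℤ) = 2 * (t : ℤ) + 1 := by push_cast; ring
      rw [e1]
      have eg1 : (n:ℤ) + (2*(t:ℤ) + 1) = (n:ℤ) + 2*(t:ℤ) + 1 := by ring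
      rw [eg1]
      have eg2 : (n:ℤ) + 2*(t:ℤ) + 1 + 2 = (n:ℤ) + 2*((t+1:ℕ):ℤ) + 1 := by push_cast; ring
      rw [eg2]
      have ef : (n:ℤ) + 2*(t:ℤ) + 1 + 1 = (n:ℤ) + 2*((t+1:ℕ):ℤ) := by push_cast; ring
      rw [ef]
      rw [hgodd' t]
      rw [show (n:ℤ) + 2*((t+1:ℕ):ℤ) + 1 = (n:ℤ) + 2*((t+1:ℕ)) + 1 from rfl, hgodd' (t+1)]
      rw [hS (t+1)]
      -- scalar identities
      have hpos : (0:ℝ) < 2*(n:ℝ)+2*t+1+ε := by positivity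
      have hbpval : bp ((n:ℤ)+2*(t:ℤ)+1) = (2*(n:ℝ)+2*t+1+ε)/2 := by
        rw [hbpv]; push_cast; ring
      have hbmval : bm ((n:ℤ)+2*((t+1:ℕ):ℤ)+1) = (2*(t:ℝ)+3)/2 := by
        rw [hbmv]; push_cast; ring
      have r1 : bp ((n:ℤ)+2*(t:ℤ)+1) * (1/bm ((n:ℤ)+1) * g1 t) * D0 (t+1) = 1 := by
        have h := hclosed t
        rw [eq_div_iff hpos.ne'] at h
        rw [hbm1, hbpval]
        linear_combination h
      have r2 : bp ((n:ℤ)+2*(t:ℤ)+1) * (1/bm ((n:ℤ)+1) * g1 t) =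
          bm ((n:ℤ)+2*((t+1:ℕ):ℤ)+1) * (1/bm ((n:ℤ)+1) * g1 (t+1)) := by
        have v1 : bp ((n:ℤ)+2*((t:ℤ)+1)-1) = (2*(n:ℝ)+2*t+1+ε)/2 := by
          rw [hbpv]; push_cast; ring
        have v2 : bm ((n:ℤ)+2*((t:ℤ)+1)+1) = (2*(t:ℝ)+3)/2 := by
          rw [hbmv]; push_cast; ring
        rw [hg1step t, hbpval, hbmval, hbm1, v1, v2]
        have h3 : (0:ℝ) < 2*(t:ℝ)+3 := by positivity
        field_simp
      have rc1 : ((bp ((n:ℤ)+2*(t:ℤ)+1) : ℝ):ℂ) * ((1/bm ((n:ℤ)+1) * g1 t : ℝ):ℂ) *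
          ((D0 (t+1):ℝ):ℂ) = 1 := by
        rw [← Complex.ofReal_mul, ← Complex.ofReal_mul, r1, Complex.ofReal_one]
      have rc2 : ((bp ((n:ℤ)+2*(t:ℤ)+1):ℝ):ℂ) * ((1/bm ((n:ℤ)+1)*g1 t : ℝ):ℂ) =
          ((bm ((n:ℤ)+2*((t+1:ℕ):ℤ)+1):ℝ):ℂ) * ((1/bm ((n:ℤ)+1)*g1 (t+1):ℝ):ℂ) := by
        rw [← Complex.ofReal_mul, ← Complex.ofReal_mul, r2]
      simp only [ha_def]
      linear_combination (-(f ((n:ℤ)+2*((t+1:ℕ):ℤ)))) * rc1 - S (t+2) * rc2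
  · have h0 := hgodd' 0
    have e : (n:ℤ) + 2*((0:ℕ):ℤ) + 1 = (n:ℤ) + 1 := by norm_num
    rw [e] at h0
    have hg10 : g1 0 = 1 := by
      rw [hg1 0, Finset.Icc_eq_empty (by norm_num), Finset.prod_empty]
    have hS1 : S 1 = -a 0 := by
      have h := hS 0
      rw [hS0] at h
      linear_combination -h
    have ha0 : a 0 = f (n:ℤ) := by
      simp only [ha_def]
      rw [hD0 0, Finset.Icc_eq_empty (by norm_num), Finset.prod_empty]
      norm_num
    rw [h0, hg10, hS1, ha0, hbm1]
    push_cast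
    ring
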